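/- There exists a constant C > 1, depending only on the dimension of E, such that for every subspace U ⊆ E and every linear map S : U → U⊥, with graph Γ_S := { u + S u : u ∈ U }, one has (1/C) ‖S‖ (1 + ‖S‖²)^{−1/2} ≤ δ(U, Γ_S) ≤ C ‖S‖ (1 + ‖S‖²)^{−1/2}. -/

import Mathlib

open Module Submodule

noncomputable section

variable {E : Type*} [NormedAddCommGroup E] [InnerProductSpace ℝ E] [FiniteDimensional ℝ E]

/-- The orthogonal projection onto a subspace `U`, viewed as a continuous linear
endomorphism of `E`. -/
noncomputable def projCLM (U : Submodule ℝ E) : E →L[ℝ] E :=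
  U.subtypeL.comp (orthogonalProjection U)

/-- The gap `δ(U,V) := ‖P_U - P_V ∘ P_U‖` between two subspaces. -/
noncomputable def gap (U V : Submodule ℝ E) : ℝ :=
  ‖projCLM U - (projCLM V).comp (projCLM U)‖

theorem projCLM_min {V : Submodule ℝ E} (v w : E) (hw : w ∈ V) :
    ‖v - projCLM V v‖ ≤ ‖v - w‖ := by
  rw [show (projCLM V v : E) = V.starProjection v from rfl,
    starProjection_minimal]
  exact ciInf_le ⟨0, by rintro z ⟨i, rfl⟩; exact norm_nonneg _⟩ (⟨w, hw⟩ : V)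

theorem graph_pythagoras {U : Submodule ℝ E} (S : ↥U →L[ℝ] ↥Uᗮ) (x y : ↥U) :
    ‖(x : E) - ((y : E) + ((S y : E)))‖ ^ 2
      = ‖(x : E) - (y : E)‖ ^ 2 + ‖(S y : E)‖ ^ 2 := by
  have hxy : ((x : E) - (y : E)) ∈ U := U.sub_mem x.2 y.2
  have hinner : inner ℝ ((x : E) - (y : E)) ((S y : E)) = (0:ℝ) :=
    Submodule.inner_right_of_mem_orthogonal hxy (S y).2
  have h : (x : E) - ((y : E) + ((S y : E))) = ((x : E) - (y : E)) - ((S y : E)) := by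
    abel
  rw [h, norm_sub_sq_real, hinner]
  ring

theorem aux_lower {K s sx d a b : ℝ} (hs : 0 < s) (hssq : s ^ 2 = 1 + K ^ 2)
    (ha : 0 ≤ a) (hb : 0 ≤ b) (hd : 0 ≤ d) (hsx : 0 ≤ sx)
    (hpyth : d ^ 2 = a ^ 2 + b ^ 2) (hab : sx ≤ K * a + b) : sx / s ≤ d := by
  have hK : 0 ≤ K * a + b := le_trans hsx hab
  have h1 : sx ^ 2 ≤ (K * a + b) ^ 2 := pow_le_pow_left₀ hsx hab 2
  have h2 : (K * a + b) ^ 2 ≤ (1 + K ^ 2) * (a ^ 2 + b ^ 2) := by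
    nlinarith [sq_nonneg (a - K * b)]
  have hds : 0 ≤ d * s := mul_nonneg hd hs.le
  have h3 : sx ^ 2 ≤ (d * s) ^ 2 := by nlinarith
  have h4 := Real.sqrt_le_sqrt h3
  rw [Real.sqrt_sq hsx, Real.sqrt_sq hds] at h4
  rw [div_le_iff₀ hs]
  exact h4

theorem aux_upper {K s c D W A B N : ℝ} (hs : 0 < s) (hssq : s ^ 2 = 1 + K ^ 2)
    (hc : c = 1 / (1 + K ^ 2)) (hK : 0 ≤ K) (hD : 0 ≤ D) (hN : 0 ≤ N) (hB : 0 ≤ B)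
    (hDW : D ≤ W) (hW : W ^ 2 = A ^ 2 + B ^ 2)
    (hA : A = (1 - c) * N) (hBle : B ≤ c * (K * N)) :
    D ≤ K / s * N := by
  have hk2 : (0:ℝ) < 1 + K ^ 2 := by positivity
  have h1 : D ^ 2 ≤ W ^ 2 := pow_le_pow_left₀ hD hDW 2
  have h2 : B ^ 2 ≤ (c * (K * N)) ^ 2 := pow_le_pow_left₀ hB hBle 2
  have hA2 : A ^ 2 = (1 - c) ^ 2 * N ^ 2 := by rw [hA]; ring
  have hq : (1 - c) ^ 2 + c ^ 2 * K ^ 2 = K ^ 2 / (1 + K ^ 2) := by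
    rw [hc]; field_simp; ring
  have hq' : ((1 - c) ^ 2 + c ^ 2 * K ^ 2) * N ^ 2 = K ^ 2 / (1 + K ^ 2) * N ^ 2 := by
    rw [hq]
  have h2' : (c * (K * N)) ^ 2 = c ^ 2 * K ^ 2 * N ^ 2 := by ring
  have h3 : D ^ 2 ≤ K ^ 2 / (1 + K ^ 2) * N ^ 2 := by
    rw [h2'] at h2
    nlinarith [h1, hW, hA2, h2, hq']
  have h3' : D ^ 2 ≤ (K / s * N) ^ 2 := by
    rw [mul_pow, div_pow, hssq]
    exact h3
  have h4 := Real.sqrt_le_sqrt h3'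
  rwa [Real.sqrt_sq hD, Real.sqrt_sq (by positivity)] at h4

theorem lower_pointwise (U : Submodule ℝ E) (S : ↥U →L[ℝ] ↥Uᗮ) (x : ↥U) :
    ‖S x‖ / Real.sqrt (1 + ‖S‖ ^ 2)
      ≤ ‖(x : E) - projCLM (LinearMap.range ((U.subtypeL + Uᗮ.subtypeL.comp S : ↥U →L[ℝ] E) : ↥U →ₗ[ℝ] E)) (x : E)‖ := by
  set Γ : Submodule ℝ E := LinearMap.range ((U.subtypeL + Uᗮ.subtypeL.comp S : ↥U →L[ℝ] E) : ↥U →ₗ[ℝ] E) with hΓ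
  obtain ⟨y, hy⟩ : ∃ y : ↥U, ((orthogonalProjection Γ (x : E) : E)) = (y : E) + ((S y : E)) := by
    obtain ⟨y, hy⟩ := (orthogonalProjection Γ (x : E)).2
    exact ⟨y, hy.symm⟩
  have hd : projCLM Γ ((x : E)) = (y : E) + ((S y : E)) := hy
  rw [hd]
  have hab : ‖S x‖ ≤ ‖S‖ * ‖(x : E) - (y : E)‖ + ‖(S y : E)‖ := by
    have hxyy : x - y + y = x := by abel
    have h1 : ‖S x‖ ≤ ‖S (x - y)‖ + ‖S y‖ := by
      calc ‖S x‖ = ‖S (x - y) + S y‖ := by rw [← map_add, hxyy]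
        _ ≤ ‖S (x - y)‖ + ‖S y‖ := norm_add_le _ _
    have h2 : ‖S (x - y)‖ ≤ ‖S‖ * ‖x - y‖ := S.le_opNorm _
    have h3 : ‖x - y‖ = ‖(x : E) - (y : E)‖ := rfl
    have h4 : ‖S y‖ = ‖(S y : E)‖ := rfl
    rw [h3] at h2
    rw [h4] at h1
    linarith
  exact aux_lower (Real.sqrt_pos.mpr (by positivity)) (Real.sq_sqrt (by positivity))
    (norm_nonneg _) (norm_nonneg _) (norm_nonneg _) (norm_nonneg _)
    (graph_pythagoras S x y) hab

theorem upper_pointwise (U : Submodule ℝ E) (S : ↥U →L[ℝ] ↥Uᗮ) (x : ↥U) :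
    ‖(x : E) - projCLM (LinearMap.range ((U.subtypeL + Uᗮ.subtypeL.comp S : ↥U →L[ℝ] E) : ↥U →ₗ[ℝ] E)) (x : E)‖
      ≤ ‖S‖ / Real.sqrt (1 + ‖S‖ ^ 2) * ‖(x : E)‖ := by
  set Γ : Submodule ℝ E := LinearMap.range ((U.subtypeL + Uᗮ.subtypeL.comp S : ↥U →L[ℝ] E) : ↥U →ₗ[ℝ] E) with hΓ
  have hk2 : (0:ℝ) < 1 + ‖S‖ ^ 2 := by positivity
  set c : ℝ := 1 / (1 + ‖S‖ ^ 2) with hc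
  have hc0 : 0 < c := by positivity
  have hc1 : c ≤ 1 := by
    rw [hc, div_le_one hk2]; nlinarith [sq_nonneg ‖S‖]
  have hmem : ((c • x : ↥U) : E) + ((S (c • x) : E)) ∈ Γ := ⟨c • x, rfl⟩
  have hDW := projCLM_min (V := Γ) ((x : E)) _ hmem
  have hW := graph_pythagoras S x (c • x)
  have hA : ‖(x : E) - ((c • x : ↥U) : E)‖ = (1 - c) * ‖(x : E)‖ := by
    have h : (x : E) - ((c • x : ↥U) : E) = (1 - c) • (x : E) := by
      push_cast
      module
    rw [h, norm_smul, Real.norm_eq_abs, abs_of_nonneg (by linarith)]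
  have hBle : ‖(S (c • x) : E)‖ ≤ c * (‖S‖ * ‖(x : E)‖) := by
    have h5 : ‖S (c • x)‖ = c * ‖S x‖ := by
      rw [map_smul, norm_smul, Real.norm_eq_abs, abs_of_nonneg hc0.le]
    calc ‖(S (c • x) : E)‖ = ‖S (c • x)‖ := rfl
      _ = c * ‖S x‖ := h5
      _ ≤ c * (‖S‖ * ‖x‖) := mul_le_mul_of_nonneg_left (S.le_opNorm x) hc0.le
      _ = c * (‖S‖ * ‖(x : E)‖) := rfl
  exact aux_upper (Real.sqrt_pos.mpr (by positivity)) (Real.sq_sqrt (by positivity)) hc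
    (ContinuousLinearMap.opNorm_nonneg S) (norm_nonneg _) (norm_nonneg _) (norm_nonneg _)
    hDW hW hA hBle

theorem gap_graph_apply (U : Submodule ℝ E) (S : ↥U →L[ℝ] ↥Uᗮ) (v : E) :
    (projCLM U - ((projCLM (LinearMap.range ((U.subtypeL + Uᗮ.subtypeL.comp S : ↥U →L[ℝ] E) : ↥U →ₗ[ℝ] E))).comp
        (projCLM U))) v
      = ((orthogonalProjection U v : E))
        - projCLM (LinearMap.range ((U.subtypeL + Uᗮ.subtypeL.comp S : ↥U →L[ℝ] E) : ↥U →ₗ[ℝ] E))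
            ((orthogonalProjection U v : E)) := by
  simp [projCLM, ContinuousLinearMap.sub_apply, ContinuousLinearMap.comp_apply]

/-- There exists a constant `C > 1`, depending only on `dim E`, such that for every
subspace `U ⊆ E` and every linear map `S : U → U⊥` with graph `Γ_S = {u + Su : u ∈ U}`,
`(1/C) ‖S‖ (1+‖S‖²)^{-1/2} ≤ δ(U, Γ_S) ≤ C ‖S‖ (1+‖S‖²)^{-1/2}`. -/
theorem gap_to_graph_bounds (n : ℕ) :
    ∃ C : ℝ, 1 < C ∧
      ∀ (E : Type*) [NormedAddCommGroup E] [InnerProductSpace ℝ E] [FiniteDimensional ℝ E],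
        finrank ℝ E = n →
        ∀ (U : Submodule ℝ E) (S : ↥U →L[ℝ] ↥Uᗮ),
          (1 / C) * (‖S‖ / Real.sqrt (1 + ‖S‖ ^ 2))
              ≤ gap U (LinearMap.range ((U.subtypeL + Uᗮ.subtypeL.comp S : ↥U →L[ℝ] E) : ↥U →ₗ[ℝ] E)) ∧
            gap U (LinearMap.range ((U.subtypeL + Uᗮ.subtypeL.comp S : ↥U →L[ℝ] E) : ↥U →ₗ[ℝ] E))
              ≤ C * (‖S‖ / Real.sqrt (1 + ‖S‖ ^ 2)) := by
  refine ⟨2, one_lt_two, ?_⟩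
  intro E _ _ _ _ U S
  have hs1 : (0:ℝ) < Real.sqrt (1 + ‖S‖ ^ 2) := Real.sqrt_pos.mpr (by positivity)
  have ht0 : (0:ℝ) ≤ ‖S‖ / Real.sqrt (1 + ‖S‖ ^ 2) := by positivity
  have hgap_le : gap U (LinearMap.range ((U.subtypeL + Uᗮ.subtypeL.comp S : ↥U →L[ℝ] E) : ↥U →ₗ[ℝ] E))
      ≤ ‖S‖ / Real.sqrt (1 + ‖S‖ ^ 2) := by
    apply ContinuousLinearMap.opNorm_le_bound _ ht0
    intro v
    rw [gap_graph_apply U S v]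
    have h1 := upper_pointwise U S (orthogonalProjection U v)
    have h2 : ‖((orthogonalProjection U v : E))‖ ≤ ‖v‖ := by
      calc ‖((orthogonalProjection U v : E))‖ = ‖orthogonalProjection U v‖ := rfl
        _ ≤ ‖orthogonalProjection U‖ * ‖v‖ := (orthogonalProjection U).le_opNorm v
        _ ≤ 1 * ‖v‖ :=
            mul_le_mul_of_nonneg_right (orthogonalProjection_norm_le U) (norm_nonneg _)
        _ = ‖v‖ := one_mul _
    calc ‖((orthogonalProjection U v : E))
          - projCLM (LinearMap.range ((U.subtypeL + Uᗮ.subtypeL.comp S : ↥U →L[ℝ] E) : ↥U →ₗ[ℝ] E))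
              ((orthogonalProjection U v : E))‖
        ≤ ‖S‖ / Real.sqrt (1 + ‖S‖ ^ 2) * ‖((orthogonalProjection U v : E))‖ := h1
      _ ≤ ‖S‖ / Real.sqrt (1 + ‖S‖ ^ 2) * ‖v‖ := mul_le_mul_of_nonneg_left h2 ht0
  constructor
  · -- lower bound
    by_cases hS0 : ‖S‖ = 0
    · rw [hS0]
      simpa [gap] using norm_nonneg
        (projCLM U - ((projCLM (LinearMap.range ((U.subtypeL + Uᗮ.subtypeL.comp S : ↥U →L[ℝ] E) : ↥U →ₗ[ℝ] E))).comp
          (projCLM U)))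
    · have hKpos : (0:ℝ) < ‖S‖ := lt_of_le_of_ne (ContinuousLinearMap.opNorm_nonneg S) (Ne.symm hS0)
      obtain ⟨x, hx1, hx2⟩ := S.exists_lt_apply_of_lt_opNorm (half_lt_self hKpos)
      have h1 := lower_pointwise U S x
      have happ : (projCLM U - ((projCLM (LinearMap.range ((U.subtypeL + Uᗮ.subtypeL.comp S : ↥U →L[ℝ] E) : ↥U →ₗ[ℝ] E))).comp
          (projCLM U))) ((x : E))
          = (x : E) - projCLM (LinearMap.range ((U.subtypeL + Uᗮ.subtypeL.comp S : ↥U →L[ℝ] E) : ↥U →ₗ[ℝ] E)) ((x : E)) := by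
        rw [gap_graph_apply U S ((x : E)),
          orthogonalProjection_mem_subspace_eq_self x]
      have h2 : ‖(x : E) - projCLM (LinearMap.range ((U.subtypeL + Uᗮ.subtypeL.comp S : ↥U →L[ℝ] E) : ↥U →ₗ[ℝ] E)) ((x : E))‖
          ≤ gap U (LinearMap.range ((U.subtypeL + Uᗮ.subtypeL.comp S : ↥U →L[ℝ] E) : ↥U →ₗ[ℝ] E)) := by
        rw [← happ]
        calc ‖(projCLM U - ((projCLM (LinearMap.range ((U.subtypeL + Uᗮ.subtypeL.comp S : ↥U →L[ℝ] E) : ↥U →ₗ[ℝ] E))).comp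
              (projCLM U))) ((x : E))‖
            ≤ gap U (LinearMap.range ((U.subtypeL + Uᗮ.subtypeL.comp S : ↥U →L[ℝ] E) : ↥U →ₗ[ℝ] E)) * ‖(x : E)‖ :=
              ContinuousLinearMap.le_opNorm _ _
          _ ≤ gap U (LinearMap.range ((U.subtypeL + Uᗮ.subtypeL.comp S : ↥U →L[ℝ] E) : ↥U →ₗ[ℝ] E)) * 1 := by
              apply mul_le_mul_of_nonneg_left _ (norm_nonneg _)
              exact le_of_lt hx1
          _ = gap U (LinearMap.range ((U.subtypeL + Uᗮ.subtypeL.comp S : ↥U →L[ℝ] E) : ↥U →ₗ[ℝ] E)) := mul_one _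
      have h3 : ‖S‖ / 2 / Real.sqrt (1 + ‖S‖ ^ 2) ≤ ‖S x‖ / Real.sqrt (1 + ‖S‖ ^ 2) := by
        gcongr
      calc (1 / 2 : ℝ) * (‖S‖ / Real.sqrt (1 + ‖S‖ ^ 2))
          = ‖S‖ / 2 / Real.sqrt (1 + ‖S‖ ^ 2) := by ring
        _ ≤ ‖S x‖ / Real.sqrt (1 + ‖S‖ ^ 2) := h3
        _ ≤ ‖(x : E) - projCLM (LinearMap.range ((U.subtypeL + Uᗮ.subtypeL.comp S : ↥U →L[ℝ] E) : ↥U →ₗ[ℝ] E)) ((x : E))‖ :=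
            h1
        _ ≤ gap U (LinearMap.range ((U.subtypeL + Uᗮ.subtypeL.comp S : ↥U →L[ℝ] E) : ↥U →ₗ[ℝ] E)) := h2
  · -- upper bound
    calc gap U (LinearMap.range ((U.subtypeL + Uᗮ.subtypeL.comp S : ↥U →L[ℝ] E) : ↥U →ₗ[ℝ] E))
        ≤ ‖S‖ / Real.sqrt (1 + ‖S‖ ^ 2) := hgap_le
      _ ≤ 2 * (‖S‖ / Real.sqrt (1 + ‖S‖ ^ 2)) := by linarith
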